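/- Let f : ℂ → ℂ be a transcendental entire function for which there exists a sequence (D_n)_{n∈ℕ} of bounded, simply connected domains with closure(D_n) ⊆ D_{n+1} for all n, ⋃_n D_n = ℂ, and such that f(∂D_n) surrounds closure(D_n) for all n (i.e. closure(D_n) lies in a bounded connected component of the complement of f(∂D_n)). Then f has no finite asymptotic values: there is no a ∈ ℂ and no continuous curve γ : [0,∞) → ℂ with |γ(t)| → ∞ and f(γ(t)) → a as t → ∞. -/

import Mathlib

open Filter Topology

/-- The set `K(f)` of points whose orbit under iteration of `f` is bounded. -/
def boundedOrbitSet (f : ℂ → ℂ) : Set ℂ :=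
  {z : ℂ | Bornology.IsBounded (Set.range fun n : ℕ => f^[n] z)}

/-- `f` is a transcendental entire function: holomorphic on all of `ℂ` and not a polynomial. -/
def TranscendentalEntire (f : ℂ → ℂ) : Prop :=
  Differentiable ℂ f ∧ ¬∃ p : Polynomial ℂ, ∀ z, f z = p.eval z

/-- `S` surrounds `T`: `T` lies in a bounded connected component of the complement of `S`. -/
def SurroundsSet (S T : Set ℂ) : Prop :=
  ∃ z ∈ Sᶜ, T ⊆ connectedComponentIn Sᶜ z ∧
    Bornology.IsBounded (connectedComponentIn Sᶜ z)

/-- `f` is strongly polynomial-like: there is an exhausting sequence of bounded, simply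
connected domains `D n` with `closure (D n) ⊆ D (n+1)` such that `f(∂(D n))` surrounds
`closure (D n)`. -/
def StronglyPolynomialLike (f : ℂ → ℂ) : Prop :=
  ∃ D : ℕ → Set ℂ,
    (∀ n, IsOpen (D n)) ∧ (∀ n, IsConnected (D n)) ∧
    (∀ n, Bornology.IsBounded (D n)) ∧
    (∀ n, SimplyConnectedSpace (D n)) ∧
    (∀ n, closure (D n) ⊆ D (n + 1)) ∧
    (⋃ n, D n) = Set.univ ∧
    (∀ n, SurroundsSet (f '' frontier (D n)) (closure (D n)))

/-- A transcendental entire function admitting an exhaustion by bounded, simply connected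
domains `D n` with `closure (D n) ⊆ D (n+1)` such that `f(∂(D n))` surrounds
`closure (D n)` has no finite asymptotic values. -/
theorem no_finite_asymptotic_values (f : ℂ → ℂ) (hf : TranscendentalEntire f)
    (D : ℕ → Set ℂ)
    (hopen : ∀ n, IsOpen (D n)) (hconn : ∀ n, IsConnected (D n))
    (hbd : ∀ n, Bornology.IsBounded (D n)) (hsc : ∀ n, SimplyConnectedSpace (D n))
    (hcl : ∀ n, closure (D n) ⊆ D (n + 1)) (hun : (⋃ n, D n) = Set.univ)
    (hsurr : ∀ n, SurroundsSet (f '' frontier (D n)) (closure (D n))) :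
    ¬ ∃ a : ℂ, ∃ γ : ℝ → ℂ, ContinuousOn γ (Set.Ici (0 : ℝ)) ∧
        Tendsto (fun t => ‖γ t‖) atTop atTop ∧
        Tendsto (fun t => f (γ t)) atTop (nhds a) := by
  rintro ⟨a, γ, hγc, hγinf, hγa⟩
  -- the domains are monotone
  have hmono : Monotone D := monotone_nat_of_le_succ fun n => subset_closure.trans (hcl n)
  -- find N with a ∈ D N, and a ball around a inside D N
  obtain ⟨N, haN⟩ : ∃ N, a ∈ D N := by
    have : a ∈ ⋃ n, D n := hun ▸ Set.mem_univ a
    exact Set.mem_iUnion.1 this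
  obtain ⟨r, hr, hball⟩ := Metric.isOpen_iff.1 (hopen N) a haN
  -- find T₀ with dist (f (γ t)) a < r for t ≥ T₀
  obtain ⟨T₀, hT₀⟩ := Filter.eventually_atTop.1 (Metric.tendsto_nhds.1 hγa r hr)
  set T : ℝ := max T₀ 0 with hTdef
  have hT0 : (0 : ℝ) ≤ T := le_max_right _ _
  -- pick M with γ T ∈ D M; set m := max M N
  obtain ⟨M, hM⟩ : ∃ M, γ T ∈ D M := by
    have : γ T ∈ ⋃ n, D n := hun ▸ Set.mem_univ _
    exact Set.mem_iUnion.1 this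
  set m : ℕ := max M N with hmdef
  have hγTm : γ T ∈ D m := hmono (le_max_left _ _) hM
  -- closure (D m) is bounded, contained in a closed ball of radius C
  obtain ⟨C, hC⟩ := (Metric.isBounded_iff_subset_closedBall (0:ℂ)).1 (hbd m).closure
  -- find t₁ ≥ T with |γ t₁| > C
  obtain ⟨T₁, hT₁⟩ := Filter.eventually_atTop.1 (hγinf.eventually_gt_atTop C)
  set t₁ : ℝ := max T T₁ with ht₁def
  have hTt₁ : T ≤ t₁ := le_max_left _ _
  have hγt₁ : γ t₁ ∉ closure (D m) := by
    intro h
    have h1 := hC h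
    have h2 := hT₁ t₁ (le_max_right _ _)
    rw [Metric.mem_closedBall] at h1
    simp only [Complex.dist_eq, sub_zero] at h1
    exact absurd h1 (not_le.2 h2)
  -- continuity of γ on [T, t₁]
  have hsub : Set.Icc T t₁ ⊆ Set.Ici (0:ℝ) := fun t ht => le_trans hT0 ht.1
  have hγcc : ContinuousOn γ (Set.Icc T t₁) := hγc.mono hsub
  -- crossing: there is t* ∈ [T, t₁] with γ t* ∈ frontier (D m)
  obtain ⟨t', ht'mem, ht'fr⟩ : ∃ t' ∈ Set.Icc T t₁, γ t' ∈ frontier (D m) := by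
    by_contra hno
    push_neg at hno
    have hpre : IsPreconnected (γ '' Set.Icc T t₁) :=
      (isPreconnected_Icc).image γ hγcc
    have hfr : frontier (D m) = closure (D m) \ D m := (hopen m).frontier_eq
    have hcover : γ '' Set.Icc T t₁ ⊆ D m ∪ (closure (D m))ᶜ := by
      rintro x ⟨t, ht, rfl⟩
      have := hno t ht
      rw [hfr] at this
      by_cases h : γ t ∈ D m
      · exact Or.inl h
      · exact Or.inr fun hc => this ⟨hc, h⟩
    have h1 : (γ '' Set.Icc T t₁ ∩ D m).Nonempty :=
      ⟨γ T, ⟨T, ⟨le_refl T, hTt₁⟩, rfl⟩, hγTm⟩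
    have h2 : (γ '' Set.Icc T t₁ ∩ (closure (D m))ᶜ).Nonempty :=
      ⟨γ t₁, ⟨t₁, ⟨hTt₁, le_refl t₁⟩, rfl⟩, hγt₁⟩
    obtain ⟨x, hx⟩ := hpre (D m) (closure (D m))ᶜ (hopen m) isClosed_closure.isOpen_compl
      hcover h1 h2
    exact hx.2.2 (subset_closure hx.2.1)
  -- f (γ t') is in the image of the frontier, and within distance r of a
  have hdist : dist (f (γ t')) a < r := by
    have hT' : T₀ ≤ t' := le_trans (le_max_left _ _) ht'mem.1
    exact hT₀ t' hT'
  have hmem : f (γ t') ∈ f '' frontier (D m) := Set.mem_image_of_mem f ht'fr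
  -- but the ball around a is inside closure (D m), which is disjoint from f '' frontier (D m)
  obtain ⟨z, hz, hsubc, _⟩ := hsurr m
  have hballm : Metric.ball a r ⊆ (f '' frontier (D m))ᶜ := by
    intro x hx
    have hxD : x ∈ D m := hmono (le_max_right M N) (hball hx)
    exact connectedComponentIn_subset _ _ (hsubc (subset_closure hxD))
  exact hballm (Metric.mem_ball.2 hdist) hmem
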